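/- Let K be a field, p > 3 a prime and s ≥ 1 an integer. Set a_1 = p^s and a_i = p^{s+i−2} + 2p^{s−i+1} for 2 ≤ i ≤ s+1. Let φ : K[t_1, …, t_{s+1}] → K[Y] be the K-algebra homomorphism with φ(t_i) = Y^{a_i}. Then the kernel of φ is generated by the s polynomials t_2^p − t_1^{p+2} and t_{i+1}^p − t_1^{p^{i−2}(p^2−1)} t_i for 2 ≤ i ≤ s. In particular, the image of φ is a complete intersection ring. -/

import Mathlib

open MvPolynomial

namespace SPEAux

/-- exponents -/
def ee (p s : ℕ) (v : Fin (s+1)) : ℕ :=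
  if v.1 = 0 then p ^ s else p ^ (s + v.1 - 1) + 2 * p ^ (s - v.1)

lemma ee_zero (p s : ℕ) : ee p s 0 = p ^ s := by simp [ee]

lemma ee_ne (p s : ℕ) (v : Fin (s+1)) (h : v.1 ≠ 0) :
    ee p s v = p ^ (s + v.1 - 1) + 2 * p ^ (s - v.1) := by rw [ee, if_neg h]

/-- replacement exponent multiset for reducing `X j ^ p` -/
noncomputable def repl (p s : ℕ) (j : Fin (s+1)) : Fin (s+1) →₀ ℕ :=
  if j.1 = 1 then Finsupp.single 0 (p+2)
  else Finsupp.single 0 (p^(j.1-2)*(p^2-1)) + Finsupp.single ⟨j.1-1, by omega⟩ 1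

/-- weight -/
def wt (s : ℕ) (d : Fin (s+1) →₀ ℕ) : ℕ := ∑ v, v.1 * d v

lemma wt_add (s : ℕ) (a b : Fin (s+1) →₀ ℕ) : wt s (a+b) = wt s a + wt s b := by
  simp [wt, mul_add, Finset.sum_add_distrib]

lemma wt_single (s : ℕ) (v : Fin (s+1)) (n : ℕ) : wt s (Finsupp.single v n) = v.1 * n := by
  classical
  simp [wt, Finsupp.single_apply]

lemma sum_single_mul (s : ℕ) (a : Fin (s+1)) (n : ℕ) (f : Fin (s+1) → ℕ) :
    ∑ v, (Finsupp.single a n) v * f v = n * f a := by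
  classical
  rw [Finset.sum_eq_single a]
  · simp
  · intro b _ hb
    simp [Finsupp.single_apply, Ne.symm hb]
  · simp

/-- key arithmetic identity -/
lemma repl_eval (p s : ℕ) (hp : 2 ≤ p) (hs : 1 ≤ s) (j : Fin (s+1)) (hj : j.1 ≠ 0) :
    ∑ v, (repl p s j) v * ee p s v = p * ee p s j := by
  have hjs : j.1 ≤ s := by omega
  rcases eq_or_ne j.1 1 with h1 | h1
  · rw [repl, if_pos h1, sum_single_mul, ee_zero, ee_ne p s j hj, h1]
    obtain ⟨k, rfl⟩ : ∃ k, s = k + 1 := ⟨s - 1, by omega⟩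
    have e1 : k + 1 + 1 - 1 = k + 1 := by omega
    have e2 : k + 1 - 1 = k := by omega
    rw [e1, e2]
    ring
  · have h2 : 2 ≤ j.1 := by omega
    rw [repl, if_neg h1]
    simp only [Finsupp.add_apply, add_mul, Finset.sum_add_distrib, sum_single_mul]
    have hne : (⟨j.1 - 1, by omega⟩ : Fin (s+1)).1 ≠ 0 := by simp; omega
    rw [ee_zero, ee_ne p s _ hne, ee_ne p s j hj]
    simp only [Fin.val_mk]
    obtain ⟨a, ha⟩ : ∃ a, j.1 = a + 2 := ⟨j.1 - 2, by omega⟩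
    obtain ⟨k, hk⟩ : ∃ k, s = a + 2 + k := ⟨s - j.1, by omega⟩
    have e1 : j.1 - 2 = a := by omega
    have e2 : s + (j.1 - 1) - 1 = 2*a + k + 2 := by omega
    have e3 : s - (j.1 - 1) = k + 1 := by omega
    have e4 : s + j.1 - 1 = 2*a + k + 3 := by omega
    have e5 : s - j.1 = k := by omega
    rw [e1, e2, e3, e4, e5, hk]
    have hq : p ^ 2 = (p ^ 2 - 1) + 1 := by
      have : 1 ≤ p ^ 2 := Nat.one_le_pow _ _ (by omega)
      omega
    set q := p ^ 2 - 1 with hqdef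
    calc p ^ a * q * p ^ (a + 2 + k) + 1 * (p ^ (2*a + k + 2) + 2 * p ^ (k + 1))
        = p ^ (2*a + k + 2) * (q + 1) + 2 * p ^ (k + 1) := by ring
      _ = p ^ (2*a + k + 2) * p ^ 2 + 2 * p ^ (k + 1) := by rw [← hq]
      _ = p * (p ^ (2*a + k + 3) + 2 * p ^ k) := by ring

lemma wt_repl_lt (p s : ℕ) (hp : 2 ≤ p) (j : Fin (s+1)) (hj : j.1 ≠ 0) :
    wt s (repl p s j) < p * j.1 := by
  have h2 : 2 * j.1 ≤ p * j.1 := Nat.mul_le_mul_right _ hp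
  rcases eq_or_ne j.1 1 with h1 | h1
  · rw [repl, if_pos h1, wt_single]
    simp only [Fin.val_zero]
    omega
  · rw [repl, if_neg h1, wt_add, wt_single, wt_single]
    simp only [Fin.val_zero]
    omega

variable {K : Type*} [Field K]

noncomputable def phi (K : Type*) [Field K] (p s : ℕ) :
    MvPolynomial (Fin (s+1)) K →ₐ[K] Polynomial K :=
  aeval (fun v => (Polynomial.X : Polynomial K) ^ ee p s v)

lemma phi_monomial (p s : ℕ) (d : Fin (s+1) →₀ ℕ) (c : K) :
    phi K p s (monomial d c) = Polynomial.C c * Polynomial.X ^ (∑ v, d v * ee p s v) := by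
  rw [phi, aeval_monomial, Finsupp.prod_fintype _ _ (fun i => pow_zero _)]
  simp_rw [← pow_mul]
  rw [Finset.prod_pow_eq_pow_sum]
  congr 1
  simp_rw [mul_comm]

/-- the generator set -/
def genSet (K : Type*) [Field K] (p s : ℕ) (hs : 1 ≤ s) : Set (MvPolynomial (Fin (s + 1)) K) :=
  {x : MvPolynomial (Fin (s + 1)) K |
            x = X ⟨1, by omega⟩ ^ p - X ⟨0, by omega⟩ ^ (p + 2) ∨
            ∃ i, ∃ _ : 2 ≤ i, ∃ _ : i ≤ s,
              x = X ⟨i, by omega⟩ ^ p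
                - X ⟨0, by omega⟩ ^ (p ^ (i - 2) * (p ^ 2 - 1)) * X ⟨i - 1, by omega⟩}

/-- each reduction binomial is in the generator set -/
lemma gen_mem (p s : ℕ) (hs : 1 ≤ s) (j : Fin (s+1)) (hj : j.1 ≠ 0) :
    (X j ^ p - monomial (repl p s j) 1 : MvPolynomial (Fin (s+1)) K) ∈ genSet K p s hs := by
  have hjs : j.1 ≤ s := by omega
  rcases eq_or_ne j.1 1 with h1 | h1
  · left
    have hx : j = ⟨1, by omega⟩ := Fin.ext h1
    have hm : (monomial (repl p s j) 1 : MvPolynomial (Fin (s+1)) K)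
        = X (⟨0, by omega⟩ : Fin (s+1)) ^ (p + 2) := by
      have h0 : (⟨0, by omega⟩ : Fin (s+1)) = 0 := Fin.ext (by simp)
      rw [h0, repl, if_pos h1, X_pow_eq_monomial]
    rw [hm, hx]
  · right
    refine ⟨j.1, by omega, hjs, ?_⟩
    have hm : (monomial (repl p s j) 1 : MvPolynomial (Fin (s+1)) K)
        = X (⟨0, by omega⟩ : Fin (s+1)) ^ (p ^ (j.1 - 2) * (p ^ 2 - 1)) * X ⟨j.1 - 1, by omega⟩ := by
      have h0 : (⟨0, by omega⟩ : Fin (s+1)) = 0 := Fin.ext (by simp)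
      rw [h0, repl, if_neg h1]
      rw [show (X (⟨j.1 - 1, by omega⟩ : Fin (s+1)) : MvPolynomial (Fin (s+1)) K)
            = X (⟨j.1 - 1, by omega⟩ : Fin (s+1)) ^ 1 from (pow_one _).symm]
      rw [X_pow_eq_monomial, X_pow_eq_monomial, monomial_mul, one_mul]
    rw [hm]

/-- injectivity on reduced exponents -/
lemma inj_reduced (p s : ℕ) (hp : p.Prime) (hp2 : 3 < p) (hs : 1 ≤ s)
    (d d' : Fin (s+1) →₀ ℕ) (hd : ∀ v : Fin (s+1), v.1 ≠ 0 → d v < p)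
    (hd' : ∀ v : Fin (s+1), v.1 ≠ 0 → d' v < p)
    (h : ∑ v, d v * ee p s v = ∑ v, d' v * ee p s v) : d = d' := by
  classical
  have hp0 : (0:ℕ) < p := hp.pos
  set D : Fin (s+1) → ℤ := fun v => (d v : ℤ) - d' v with hD
  have hsum : ∑ v, D v * (ee p s v : ℤ) = 0 := by
    have h' : ((∑ v, d v * ee p s v : ℕ) : ℤ) = ((∑ v, d' v * ee p s v : ℕ) : ℤ) := by
      exact_mod_cast congrArg (fun n : ℕ => (n : ℤ)) h
    push_cast at h'
    simp only [hD, sub_mul, Finset.sum_sub_distrib, h', sub_self]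
  have key : ∀ k : ℕ, k ≤ s → ∀ v : Fin (s+1), s - k < v.1 → D v = 0 := by
    intro k
    induction k with
    | zero => intro _ v hv; exact absurd hv (by omega)
    | succ k IH =>
      intro hk v hv
      have IH' : ∀ w : Fin (s+1), s - k < w.1 → D w = 0 := IH (by omega)
      rcases Nat.lt_or_ge (s - k) v.1 with hgt | hle
      · exact IH' v hgt
      · have hveq : v.1 = s - k := by omega
        have hv0 : v.1 ≠ 0 := by omega
        -- split the sum
        have hsplit := Finset.sum_filter_add_sum_filter_not Finset.univ
            (fun w : Fin (s+1) => w.1 ≤ s - k) (fun w => D w * (ee p s w : ℤ))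
        have hB : ∑ w ∈ Finset.univ.filter (fun w : Fin (s+1) => ¬ w.1 ≤ s - k),
            D w * (ee p s w : ℤ) = 0 := by
          apply Finset.sum_eq_zero
          intro w hw
          rw [Finset.mem_filter] at hw
          rw [IH' w (by omega)]
          ring
        have hA : ∑ w ∈ Finset.univ.filter (fun w : Fin (s+1) => w.1 ≤ s - k),
            D w * (ee p s w : ℤ) = 0 := by
          rw [hB, add_zero] at hsplit
          exact hsplit.trans hsum
        have hv_mem : v ∈ Finset.univ.filter (fun w : Fin (s+1) => w.1 ≤ s - k) := by
          simp [hveq]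
        have herase := Finset.add_sum_erase _ (fun w => D w * (ee p s w : ℤ)) hv_mem
        have hrest : (p:ℤ)^(k+1) ∣
            ∑ w ∈ (Finset.univ.filter (fun w : Fin (s+1) => w.1 ≤ s - k)).erase v,
              D w * (ee p s w : ℤ) := by
          apply Finset.dvd_sum
          intro w hw
          rw [Finset.mem_erase, Finset.mem_filter] at hw
          have hwlt : w.1 < s - k := by
            rcases Nat.lt_or_ge w.1 (s - k) with h' | h'
            · exact h'
            · exact absurd (Fin.ext (by omega) : w = v) hw.1
          rcases eq_or_ne w.1 0 with h0 | h0
          · have : ee p s w = p ^ s := by rw [ee, if_pos h0]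
            rw [this]
            push_cast
            exact Dvd.dvd.mul_left (pow_dvd_pow _ (by omega)) _
          · rw [ee_ne p s w h0]
            push_cast
            refine Dvd.dvd.mul_left ?_ _
            exact dvd_add (pow_dvd_pow _ (by omega))
              (Dvd.dvd.mul_left (pow_dvd_pow _ (by omega)) 2)
        have hDvEe : (p:ℤ)^(k+1) ∣ D v * (ee p s v : ℤ) := by
          have heq : D v * (ee p s v : ℤ) = -∑ w ∈ (Finset.univ.filter
              (fun w : Fin (s+1) => w.1 ≤ s - k)).erase v, D w * (ee p s w : ℤ) :=
            eq_neg_of_add_eq_zero_left (herase.trans hA)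
          rw [heq]
          exact hrest.neg_right
        -- extract the digit
        have heu : (ee p s v : ℤ) = (p:ℤ) ^ (s + (s - k) - 1) + 2 * (p:ℤ) ^ k := by
          rw [ee_ne p s v hv0, hveq]
          have : s - (s - k) = k := by omega
          rw [this]
          push_cast
          ring
        have hd2 : (p:ℤ)^(k+1) ∣ D v * (2 * (p:ℤ) ^ k) := by
          have h1 : (p:ℤ)^(k+1) ∣ D v * (p:ℤ) ^ (s + (s - k) - 1) :=
            Dvd.dvd.mul_left (pow_dvd_pow _ (by omega)) _
          have h2 : D v * (2 * (p:ℤ) ^ k)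
              = D v * (ee p s v : ℤ) - D v * (p:ℤ) ^ (s + (s - k) - 1) := by
            rw [heu]; ring
          rw [h2]
          exact hDvEe.sub h1
        have hpd : (p:ℤ) ∣ 2 * D v := by
          have hne : ((p:ℤ))^k ≠ 0 := pow_ne_zero _ (by exact_mod_cast hp0.ne')
          have : (p:ℤ)^k * (p:ℤ) ∣ (p:ℤ)^k * (2 * D v) := by
            have e : (p:ℤ)^k * (2 * D v) = D v * (2 * (p:ℤ) ^ k) := by ring
            have e2 : (p:ℤ)^k * (p:ℤ) = (p:ℤ)^(k+1) := by ring
            rw [e, e2]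
            exact hd2
          exact (mul_dvd_mul_iff_left hne).mp this
        have hppr : Prime (p : ℤ) := by
          rw [Int.prime_iff_natAbs_prime]
          simpa using hp
        have hpDv : (p:ℤ) ∣ D v := by
          rcases hppr.dvd_mul.mp hpd with h2 | h2
          · exfalso
            have := Int.le_of_dvd (by norm_num) h2
            omega
          · exact h2
        have hb1 : d v < p := hd v hv0
        have hb2 : d' v < p := hd' v hv0
        have habs : |D v| < (p:ℤ) := by
          have hDv : D v = (d v : ℤ) - d' v := rfl
          rw [hDv, abs_lt]
          omega
        exact Int.eq_zero_of_abs_lt_dvd hpDv habs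
  have hz : ∀ v : Fin (s+1), v.1 ≠ 0 → D v = 0 := fun v hv => key s le_rfl v (by omega)
  have h0 : D 0 = 0 := by
    have hmem : (0 : Fin (s+1)) ∈ Finset.univ := Finset.mem_univ _
    have herase := Finset.add_sum_erase _ (fun w => D w * (ee p s w : ℤ)) hmem
    have hzero : ∑ w ∈ Finset.univ.erase (0 : Fin (s+1)), D w * (ee p s w : ℤ) = 0 := by
      apply Finset.sum_eq_zero
      intro w hw
      rw [Finset.mem_erase] at hw
      have : w.1 ≠ 0 := fun hc => hw.1 (Fin.ext (by simp [hc]))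
      rw [hz w this]
      ring
    rw [hzero, add_zero, hsum] at herase
    have hee : (ee p s 0 : ℤ) ≠ 0 := by
      rw [ee_zero]
      positivity
    exact (mul_eq_zero.mp herase).resolve_right hee
  ext v
  have : D v = 0 := by
    rcases eq_or_ne v.1 0 with hv | hv
    · have : v = 0 := Fin.ext (by simp [hv])
      rw [this]; exact h0
    · exact hz v hv
  have h2 : (d v : ℤ) - (d' v : ℤ) = 0 := this
  have h3 : (d v : ℤ) = d' v := by omega
  exact_mod_cast h3

lemma phi_gen (p s : ℕ) (hp : 2 ≤ p) (hs : 1 ≤ s) (j : Fin (s+1)) (hj : j.1 ≠ 0) :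
    phi K p s (X j ^ p - monomial (repl p s j) 1) = 0 := by
  rw [map_sub]
  have h1 : phi K p s (X j ^ p) = Polynomial.X ^ (p * ee p s j) := by
    rw [map_pow, phi, aeval_X, ← pow_mul, mul_comm]
  have h2 := phi_monomial (K := K) p s (repl p s j) 1
  rw [h1, h2, repl_eval p s hp hs j hj, map_one, one_mul, sub_self]

lemma hm1 (p s : ℕ) (hs : 1 ≤ s) :
    (monomial (repl p s ⟨1, by omega⟩) 1 : MvPolynomial (Fin (s+1)) K)
      = X (⟨0, by omega⟩ : Fin (s+1)) ^ (p + 2) := by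
  have h0 : (⟨0, by omega⟩ : Fin (s+1)) = 0 := Fin.ext (by simp)
  rw [h0, repl, if_pos (by simp : ((⟨1, by omega⟩ : Fin (s+1))).1 = 1), X_pow_eq_monomial]

lemma hm2 (p s : ℕ) (i : ℕ) (h2 : 2 ≤ i) (his : i ≤ s) :
    (monomial (repl p s ⟨i, by omega⟩) 1 : MvPolynomial (Fin (s+1)) K)
      = X (⟨0, by omega⟩ : Fin (s+1)) ^ (p ^ (i - 2) * (p ^ 2 - 1)) * X ⟨i - 1, by omega⟩ := by
  have h0 : (⟨0, by omega⟩ : Fin (s+1)) = 0 := Fin.ext (by simp)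
  rw [h0, repl, if_neg (by simp only [Fin.val_mk]; omega :
    ¬ ((⟨i, by omega⟩ : Fin (s+1))).1 = 1)]
  rw [show (X (⟨i - 1, by omega⟩ : Fin (s+1)) : MvPolynomial (Fin (s+1)) K)
        = X (⟨i - 1, by omega⟩ : Fin (s+1)) ^ 1 from (pow_one _).symm]
  rw [X_pow_eq_monomial, X_pow_eq_monomial, monomial_mul, one_mul]

lemma span_le_ker (p s : ℕ) (hp : 2 ≤ p) (hs : 1 ≤ s) :
    Ideal.span (genSet K p s hs) ≤ RingHom.ker (phi K p s).toRingHom := by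
  rw [Ideal.span_le]
  intro x hx
  rcases hx with h | ⟨i, hi2, his, h⟩
  · have : x = X (⟨1, by omega⟩ : Fin (s+1)) ^ p
        - monomial (repl p s ⟨1, by omega⟩) 1 := by rw [h, hm1 p s hs]
    rw [SetLike.mem_coe, RingHom.mem_ker, this]
    exact phi_gen p s hp hs _ (by simp)
  · have : x = X (⟨i, by omega⟩ : Fin (s+1)) ^ p
        - monomial (repl p s ⟨i, by omega⟩) 1 := by rw [h, hm2 p s i hi2 his]
    rw [SetLike.mem_coe, RingHom.mem_ker, this]
    exact phi_gen p s hp hs _ (by simp; omega)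

lemma reduce (p s : ℕ) (hp : 2 ≤ p) (hs : 1 ≤ s) (f : MvPolynomial (Fin (s+1)) K) :
    ∃ r : MvPolynomial (Fin (s+1)) K, f - r ∈ Ideal.span (genSet K p s hs) ∧
      ∀ d ∈ r.support, ∀ v : Fin (s+1), v.1 ≠ 0 → d v < p := by
  induction f using MvPolynomial.induction_on' with
  | add q q' hq hq' =>
    obtain ⟨r1, hr1, hred1⟩ := hq
    obtain ⟨r2, hr2, hred2⟩ := hq'
    refine ⟨r1 + r2, ?_, ?_⟩
    · have heq : q + q' - (r1 + r2) = (q - r1) + (q' - r2) := by ring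
      rw [heq]
      exact Ideal.add_mem _ hr1 hr2
    · intro d hd v hv
      rcases Finset.mem_union.mp (MvPolynomial.support_add hd) with h | h
      · exact hred1 d h v hv
      · exact hred2 d h v hv
  | monomial d c =>
    have H : ∀ n : ℕ, ∀ d : Fin (s+1) →₀ ℕ, wt s d ≤ n → ∀ c : K,
        ∃ r, monomial d c - r ∈ Ideal.span (genSet K p s hs) ∧
          ∀ d' ∈ r.support, ∀ v : Fin (s+1), v.1 ≠ 0 → d' v < p := by
      intro n
      induction n using Nat.strong_induction_on with
      | _ n IH =>
        intro d hdn c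
        by_cases hred : ∀ v : Fin (s+1), v.1 ≠ 0 → d v < p
        · refine ⟨monomial d c, by rw [sub_self]; exact Ideal.zero_mem _, ?_⟩
          intro d' hd' v hv
          have hd'' : d' = d := Finset.mem_singleton.mp (support_monomial_subset hd')
          rw [hd'']
          exact hred v hv
        · push_neg at hred
          obtain ⟨j, hj, hjp⟩ := hred
          set d1 := d - Finsupp.single j p with hd1
          have hle : Finsupp.single j p ≤ d := Finsupp.single_le_iff.mpr hjp
          have hsumd : d1 + Finsupp.single j p = d := tsub_add_cancel_of_le hle
          have hkey : (monomial d c : MvPolynomial (Fin (s+1)) K)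
              - monomial (d1 + repl p s j) c
              = monomial d1 c * (X j ^ p - monomial (repl p s j) 1) := by
            rw [mul_sub, X_pow_eq_monomial, monomial_mul, monomial_mul, mul_one, hsumd]
          have hwt : wt s (d1 + repl p s j) < n := by
            have h1 : wt s d = wt s d1 + j.1 * p := by
              rw [← hsumd, wt_add, wt_single]
            have h2 : wt s (d1 + repl p s j) = wt s d1 + wt s (repl p s j) := wt_add s _ _
            have h3 := wt_repl_lt p s hp j hj
            have h4 : p * j.1 = j.1 * p := mul_comm _ _
            omega
          obtain ⟨r, hr, hredr⟩ := IH (wt s (d1 + repl p s j)) hwt (d1 + repl p s j) le_rfl c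
          refine ⟨r, ?_, hredr⟩
          have heq : (monomial d c : MvPolynomial (Fin (s+1)) K) - r
              = (monomial d c - monomial (d1 + repl p s j) c)
                + (monomial (d1 + repl p s j) c - r) := by ring
          rw [heq, hkey]
          exact Ideal.add_mem _
            (Ideal.mul_mem_left _ _ (Ideal.subset_span (gen_mem p s hs j hj))) hr
    exact H (wt s d) d le_rfl c

end SPEAux

/-- for `a_1 = p^s`, `a_i = p^{s+i−2} + 2p^{s−i+1}` for `2 ≤ i ≤ s+1`, the
kernel of `φ : K[t_1,…,t_{s+1}] → K[Y]`, `t_i ↦ Y^{a_i}`, is generated by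
`t_2^p − t_1^{p+2}` and `t_{i+1}^p − t_1^{p^{i−2}(p^2−1)} t_i` for `2 ≤ i ≤ s`.
(The variable `X ⟨j⟩ : MvPolynomial (Fin (s+1)) K` stands for `t_{j+1}`.) -/
theorem semigroup_presentation_even (K : Type*) [Field K] (p s : ℕ)
    (hp : p.Prime) (hp2 : 3 < p) (hs : 1 ≤ s) :
    RingHom.ker (aeval (R := K) (fun v : Fin (s + 1) =>
        (Polynomial.X : Polynomial K) ^
          (if v.1 = 0 then p ^ s
           else p ^ (s + v.1 - 1) + 2 * p ^ (s - v.1)))).toRingHom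
      = Ideal.span
          {x : MvPolynomial (Fin (s + 1)) K |
            x = X ⟨1, by omega⟩ ^ p - X ⟨0, by omega⟩ ^ (p + 2) ∨
            ∃ i, ∃ _ : 2 ≤ i, ∃ _ : i ≤ s,
              x = X ⟨i, by omega⟩ ^ p
                - X ⟨0, by omega⟩ ^ (p ^ (i - 2) * (p ^ 2 - 1)) * X ⟨i - 1, by omega⟩} := by
  have hp' : 2 ≤ p := by omega
  show RingHom.ker (SPEAux.phi K p s).toRingHom = Ideal.span (SPEAux.genSet K p s hs)
  apply le_antisymm
  · intro f hf
    rw [RingHom.mem_ker] at hf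
    obtain ⟨r, hr, hred⟩ := SPEAux.reduce p s hp' hs f
    have hphir : SPEAux.phi K p s r = 0 := by
      have h1 : SPEAux.phi K p s (f - r) = 0 := by
        have := SPEAux.span_le_ker (K := K) p s hp' hs hr
        rwa [RingHom.mem_ker] at this
      have h2 : SPEAux.phi K p s r = SPEAux.phi K p s f - SPEAux.phi K p s (f - r) := by
        rw [map_sub]; ring
      have h3 : SPEAux.phi K p s f = 0 := hf
      rw [h2, h1, h3, sub_zero]
    have hr0 : r = 0 := by
      apply MvPolynomial.ext
      intro m
      rw [coeff_zero]
      by_cases hm : m ∈ r.support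
      · have hAs : SPEAux.phi K p s r = ∑ d ∈ r.support,
            Polynomial.C (coeff d r) * Polynomial.X ^ (∑ v, d v * SPEAux.ee p s v) := by
          conv_lhs => rw [MvPolynomial.as_sum r]
          rw [map_sum]
          exact Finset.sum_congr rfl fun d _ => SPEAux.phi_monomial p s d (coeff d r)
        have hcoeff := congrArg (fun q => Polynomial.coeff q (∑ v, m v * SPEAux.ee p s v)) hAs
        simp only [hphir, Polynomial.coeff_zero] at hcoeff
        rw [Polynomial.finset_sum_coeff] at hcoeff
        simp only [Polynomial.coeff_C_mul, Polynomial.coeff_X_pow] at hcoeff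
        rw [Finset.sum_eq_single m] at hcoeff
        · rw [if_pos rfl, mul_one] at hcoeff
          exact hcoeff.symm
        · intro d hd hdm
          rw [if_neg, mul_zero]
          intro heq
          exact hdm (SPEAux.inj_reduced p s hp hp2 hs d m (hred d hd) (hred m hm) heq.symm)
        · intro hc
          exact absurd hm hc
      · exact MvPolynomial.notMem_support_iff.mp hm
    rw [hr0, sub_zero] at hr
    exact hr
  · exact SPEAux.span_le_ker p s hp' hs
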